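/- For all positive integers r and n with r odd: if n is even then L_{3r} * (∑_{k=1}^n F_{2rk}^3) = F_{rn}^2 * L_{rn+r}^2 * (L_{rn} * F_{rn+r} + F_r), and if n is odd then L_{3r} * (∑_{k=1}^n F_{2rk}^3) = L_{rn}^2 * F_{rn+r}^2 * (F_{rn} * L_{rn+r} + F_r). -/

import Mathlib

open Finset


def L : ℕ → ℤ
  | 0 => 2
  | 1 => 1
  | n + 2 => L (n + 1) + L n

def F (n : ℕ) : ℤ := Nat.fib n

lemma F_add_two (n : ℕ) : F (n + 2) = F (n + 1) + F n := by
  simp [F, Nat.fib_add_two]; ring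

lemma L_add_two (n : ℕ) : L (n + 2) = L (n + 1) + L n := rfl

lemma L_eq (n : ℕ) : L n = 2 * F (n + 1) - F n := by
  induction n using Nat.twoStepInduction with
  | zero => simp [L, F]
  | one => simp [L, F]
  | more n ih1 ih2 =>
      rw [L_add_two, ih1, ih2, F_add_two (n+1), F_add_two n]; ring

lemma F_add (m n : ℕ) : F (m + n + 1) = F (m + 1) * F (n + 1) + F m * F n := by
  have h := Nat.fib_add m n
  have h' : ((Nat.fib (m + n + 1) : ℤ)) = (Nat.fib m : ℤ) * Nat.fib n + (Nat.fib (m+1) : ℤ) * Nat.fib (n+1) := by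
    exact_mod_cast congrArg (Nat.cast : ℕ → ℤ) h
  simpa [F, mul_comm] using h'.trans (by ring)

lemma two_F_add (m n : ℕ) : 2 * F (m + n) = F m * L n + L m * F n := by
  have h1 := F_add m n
  have h2 := F_add (m + 1) n
  have h3 := F_add_two (m + n)
  have h4 := F_add_two m
  rw [show m + 1 + n + 1 = m + n + 2 from by omega, show m + 1 + 1 = m + 2 from rfl] at h2
  rw [L_eq n, L_eq m]
  linear_combination 2*h2 - 2*h1 - 2*h3 + 2*F (n+1)*h4

lemma two_L_add (m n : ℕ) : 2 * L (m + n) = L m * L n + 5 * F m * F n := by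
  have h2 := two_F_add m n
  have h3 := two_F_add m (n + 1)
  have h4 := F_add_two n
  rw [show m + (n + 1) = m + n + 1 from by omega] at h3
  rw [show n + 2 = n + 1 + 1 from rfl] at h4
  rw [L_eq (m + n), L_eq m, L_eq n, L_eq (n+1)] at *
  linear_combination 2*h3 - h2 + 4*F m*h4

lemma cassini (n : ℕ) : F (n + 1) ^ 2 - F (n + 1) * F n - F n ^ 2 = (-1) ^ n := by
  induction n with
  | zero => simp [F]
  | succ n ih =>
      rw [F_add_two n, pow_succ]
      linear_combination (-1 : ℤ) * ih

lemma LF_sq (n : ℕ) : L n ^ 2 - 5 * F n ^ 2 = 4 * (-1) ^ n := by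
  rw [L_eq n]
  linear_combination 4 * cassini n


lemma F_double (m : ℕ) : F (m + m) = F m * L m := by
  have h := two_F_add m m
  have h2 : L m * F m = F m * L m := mul_comm _ _
  linarith

lemma L_sq_odd (r : ℕ) (hro : Odd r) : L r ^ 2 - 5 * F r ^ 2 = -4 := by
  have := LF_sq r
  rw [Odd.neg_one_pow hro] at this
  linarith

lemma L_double_odd (r : ℕ) (hro : Odd r) : L (2 * r) = L r ^ 2 + 2 := by
  have h1 := two_L_add r r
  have h2 := L_sq_odd r hro
  rw [show r + r = 2 * r from by ring] at h1
  linarith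

lemma F_double' (m : ℕ) : F (2 * m) = F m * L m := by
  rw [two_mul]; exact F_double m

lemma L_triple_odd (r : ℕ) (hro : Odd r) : L (3 * r) = L r ^ 3 + 3 * L r := by
  have h1 := two_L_add (2 * r) r
  have h2 := L_double_odd r hro
  have h3 := F_double' r
  have h4 := L_sq_odd r hro
  rw [show 2 * r + r = 3 * r from by ring] at h1
  have h5 : 2 * L (3 * r) = 2 * (L r ^ 3 + 3 * L r) := by
    linear_combination h1 + L r * h2 + 5 * F r * h3 - L r * h4
  linarith

lemma keyI (x y u v A B A2 B2 : ℚ) (h1 : y^2 - 5*x^2 = 4) (h2 : v^2 - 5*u^2 = -4)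
    (hA : A = (x*v + y*u)/2) (hB : B = (y*v + 5*x*u)/2)
    (hA2 : A2 = (A*v + B*u)/2) (hB2 : B2 = (B*v + 5*A*u)/2) :
    x^2*B^2*(y*A + u) + (v^3 + 3*v)*(A*B)^3 = B^2*A2^2*(A*B2 + u) := by
  subst hB2 hA2 hB hA
  linear_combination ((1/2)*u^3*v^4 + (1/8)*u^3*v^6 + (-5/8)*u^5*v^4 + (1/8)*y^2*u^3*v^4 + (1/32)*y^2*u^3*v^6 + (-5/32)*y^2*u^5*v^4 + (3/64)*y^4*u^3*v^4 + (1/128)*y^4*u^3*v^6 + (-5/128)*y^4*u^5*v^4 + (1/2)*x*y*u^2*v^5 + (1/8)*x*y*u^2*v^7 + (15/8)*x*y*u^4*v^3 + (-5/32)*x*y*u^4*v^5 + (-75/32)*x*y*u^6*v^3 + (9/64)*x*y^3*u^2*v^5 + (1/32)*x*y^3*u^2*v^7 + (45/64)*x*y^3*u^4*v^3 + (-5/128)*x*y^3*u^4*v^5 + (-75/128)*x*y^3*u^6*v^3 + (3/4)*x^2*u*v^2 + (35/64)*x^2*u*v^6 + (19/128)*x^2*u*v^8 + (295/32)*x^2*u^3*v^4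 + (185/128)*x^2*u^3*v^6 + (575/64)*x^2*u^5*v^2 + (-1075/128)*x^2*u^5*v^4 + (-1625/128)*x^2*u^7*v^2 + (1/8)*x^2*y^2*u*v^2 + (9/64)*x^2*y^2*u*v^6 + (19/512)*x^2*y^2*u*v^8 + (75/32)*x^2*y^2*u^3*v^4 + (165/512)*x^2*y^2*u^3*v^6 + (225/64)*x^2*y^2*u^5*v^2 + (-975/512)*x^2*y^2*u^5*v^4 + (-1625/512)*x^2*y^2*u^7*v^2 + (1/8)*x^3*y*v^3 + (3/64)*x^3*y*v^7 + (7/512)*x^3*y*v^9 + (5/4)*x^3*y*u^2*v + (45/16)*x^3*y*u^2*v^5 + (325/512)*x^3*y*u^2*v^7 + (225/16)*x^3*y*u^4*v^3 + (-225/512)*x^3*y*u^4*v^5 + (375/64)*x^3*y*u^6*v + (-7125/512)*x^3*y*u^6*v^3 + (-1875/256)*x^3*y*u^8*v + (15/8)*x^4*u*v^2 + (45/32)*x^4*u*v^6 + (195/512)*x^4*u*v^8 + (25/8)*x^4*u^3 + (1425/64)*x^4*u^3*v^4 + (875/256)*x^4*u^3*v^6 + (1125/32)*x^4*u^5*v^2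 + (-4625/256)*x^4*u^5*v^4 + (-10625/256)*x^4*u^7*v^2 + (-3125/512)*x^4*u^9) * h1 + ((1/2)*u^3*v^4 + (1/2)*x*y*u^2*v^5 + (15/8)*x*y*u^4*v^3 + (3/4)*x^2*u*v^2 + (-3/16)*x^2*u*v^4 + (19/32)*x^2*u*v^6 + (15/16)*x^2*u^3*v^2 + (75/8)*x^2*u^3*v^4 + (325/32)*x^2*u^5*v^2 + (1/8)*x^3*y*v^3 + (-1/32)*x^3*y*v^5 + (7/128)*x^3*y*v^7 + (15/8)*x^3*y*u^2*v + (-5/16)*x^3*y*u^2*v^3 + (55/16)*x^3*y*u^2*v^5 + (75/32)*x^3*y*u^4*v + (1875/128)*x^3*y*u^4*v^3 + (375/64)*x^3*y*u^6*v + (45/16)*x^4*u*v^2 + (-45/64)*x^4*u*v^4 + (145/64)*x^4*u*v^6 + (75/16)*x^4*u^3 + (75/32)*x^4*u^3*v^2 + (4125/128)*x^4*u^3*v^4 + (375/64)*x^4*u^5 + (375/8)*x^4*u^5*v^2 + (625/128)*x^4*u^7 + (5/32)*x^5*y*v^3 + (-5/128)*x^5*y*v^5 + (35/512)*x^5*y*v^7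 + (75/32)*x^5*y*u^2*v + (-25/64)*x^5*y*u^2*v^3 + (2275/512)*x^5*y*u^2*v^5 + (375/128)*x^5*y*u^4*v + (10625/512)*x^5*y*u^4*v^3 + (5625/512)*x^5*y*u^6*v + (75/32)*x^6*u*v^2 + (-75/128)*x^6*u*v^4 + (975/512)*x^6*u*v^6 + (125/32)*x^6*u^3 + (125/64)*x^6*u^3*v^2 + (14375/512)*x^6*u^3*v^4 + (625/128)*x^6*u^5 + (23125/512)*x^6*u^5*v^2 + (3125/512)*x^6*u^7) * h2

lemma keyII (x y u v A B A2 B2 : ℚ) (h1 : y^2 - 5*x^2 = -4) (h2 : v^2 - 5*u^2 = -4)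
    (hA : A = (x*v + y*u)/2) (hB : B = (y*v + 5*x*u)/2)
    (hA2 : A2 = (A*v + B*u)/2) (hB2 : B2 = (B*v + 5*A*u)/2) :
    y^2*A^2*(x*B + u) + (v^3 + 3*v)*(A*B)^3 = A^2*B2^2*(B*A2 + u) := by
  subst hB2 hA2 hB hA
  linear_combination ((-1)*u^3 + (13/16)*u^3*v^4 + (3/16)*u^3*v^6 + (5/8)*u^5*v^2 + (-5/8)*u^5*v^4 + (25/16)*u^7 + (-25/16)*u^7*v^2 + (1/4)*y^2*u^3 + (-13/64)*y^2*u^3*v^4 + (-3/64)*y^2*u^3*v^6 + (-5/32)*y^2*u^5*v^2 + (5/32)*y^2*u^5*v^4 + (-25/64)*y^2*u^7 + (25/64)*y^2*u^7*v^2 + (3/64)*y^4*u^3*v^4 + (3/256)*y^4*u^3*v^6 + (-5/128)*y^4*u^5*v^4 + (-25/256)*y^4*u^7*v^2 + (-19/32)*x*y*u^2*v^5 + (-19/128)*x*y*u^2*v^7 + (-55/16)*x*y*u^4*v^3 + (-15/128)*x*y*u^4*v^5 + (-75/32)*x*y*u^6*v + (475/128)*x*y*u^6*v^3 + (375/128)*x*y*u^8*v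 + (1/8)*x*y^3*u^2*v + (9/64)*x*y^3*u^2*v^5 + (19/512)*x*y^3*u^2*v^7 + (45/64)*x*y^3*u^4*v^3 + (15/512)*x*y^3*u^4*v^5 + (-475/512)*x*y^3*u^6*v^3 + (-375/512)*x*y^3*u^8*v + (-3/4)*x^2*u*v^2 + (-37/64)*x^2*u*v^6 + (-5/32)*x^2*u*v^8 + (-5/4)*x^2*u^3 + (-715/64)*x^2*u^3*v^4 + (-245/128)*x^2*u^3*v^6 + (-1275/64)*x^2*u^5*v^2 + (1075/128)*x^2*u^5*v^4 + (-125/64)*x^2*u^7 + (3125/128)*x^2*u^7*v^2 + (625/128)*x^2*u^9 + (1/4)*x^2*y^2*u*v^2 + (9/64)*x^2*y^2*u*v^6 + (5/128)*x^2*y^2*u*v^8 + (5/8)*x^2*y^2*u^3 + (75/32)*x^2*y^2*u^3*v^4 + (215/512)*x^2*y^2*u^3*v^6 + (225/64)*x^2*y^2*u^5*v^2 + (-975/512)*x^2*y^2*u^5*v^4 + (-2875/512)*x^2*y^2*u^7*v^2 + (-625/512)*x^2*y^2*u^9 + (1/8)*x^3*y*v^3 + (3/64)*x^3*y*v^7 +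 (7/512)*x^3*y*v^9 + (15/8)*x^3*y*u^2*v + (45/16)*x^3*y*u^2*v^5 + (85/128)*x^3*y*u^2*v^7 + (225/16)*x^3*y*u^4*v^3 + (-25/256)*x^3*y*u^4*v^5 + (375/64)*x^3*y*u^6*v + (-125/8)*x^3*y*u^6*v^3 + (-5625/512)*x^3*y*u^8*v + (15/8)*x^4*u*v^2 + (45/32)*x^4*u*v^6 + (195/512)*x^4*u*v^8 + (25/8)*x^4*u^3 + (1425/64)*x^4*u^3*v^4 + (225/64)*x^4*u^3*v^6 + (1125/32)*x^4*u^5*v^2 + (-4625/256)*x^4*u^5*v^4 + (-5625/128)*x^4*u^7*v^2 + (-3125/512)*x^4*u^9) * h1 + ((1)*u^3 + (-1/4)*u^3*v^2 + (-3/4)*u^3*v^4 + (5/4)*u^5 + (-5/4)*u^5*v^2 + (19/32)*x*y*u^2*v^5 + (55/16)*x*y*u^4*v^3 + (75/32)*x*y*u^6*v + (3/4)*x^2*u*v^2 + (-3/16)*x^2*u*v^4 + (5/8)*x^2*u*v^6 + (15/16)*x^2*u^3*v^2 + (375/32)*x^2*u^3*v^4 + (175/8)*x^2*u^5*v^2 +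 (125/32)*x^2*u^7 + (-1/8)*x^3*y*v^3 + (1/32)*x^3*y*v^5 + (-7/128)*x^3*y*v^7 + (-15/8)*x^3*y*u^2*v + (5/16)*x^3*y*u^2*v^3 + (-235/64)*x^3*y*u^2*v^5 + (-75/32)*x^3*y*u^4*v + (-2375/128)*x^3*y*u^4*v^3 + (-375/32)*x^3*y*u^6*v + (-45/16)*x^4*u*v^2 + (45/64)*x^4*u*v^4 + (-295/128)*x^4*u*v^6 + (-75/16)*x^4*u^3 + (-75/32)*x^4*u^3*v^2 + (-1125/32)*x^4*u^3*v^4 + (-375/64)*x^4*u^5 + (-7875/128)*x^4*u^5*v^2 + (-625/64)*x^4*u^7 + (5/32)*x^5*y*v^3 + (-5/128)*x^5*y*v^5 + (35/512)*x^5*y*v^7 + (75/32)*x^5*y*u^2*v + (-25/64)*x^5*y*u^2*v^3 + (2275/512)*x^5*y*u^2*v^5 + (375/128)*x^5*y*u^4*v + (10625/512)*x^5*y*u^4*v^3 + (5625/512)*x^5*y*u^6*v + (75/32)*x^6*u*v^2 + (-75/128)*x^6*u*v^4 + (975/512)*x^6*u*v^6 + (125/32)*x^6*u^3 + (125/64)*x^6*u^3*v^2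 + (14375/512)*x^6*u^3*v^4 + (625/128)*x^6*u^5 + (23125/512)*x^6*u^5*v^2 + (3125/512)*x^6*u^7) * h2

theorem stmt14 (r n : ℕ) (hr : 0 < r) (hn : 0 < n) (hro : Odd r) :
    (Even n → L (3 * r) * ∑ k ∈ Finset.Icc 1 n, F (2 * r * k) ^ 3 =
      F (r * n) ^ 2 * L (r * n + r) ^ 2 * (L (r * n) * F (r * n + r) + F r)) ∧
    (Odd n → L (3 * r) * ∑ k ∈ Finset.Icc 1 n, F (2 * r * k) ^ 3 =
      L (r * n) ^ 2 * F (r * n + r) ^ 2 * (F (r * n) * L (r * n + r) + F r)) := by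
  have h2q : ((L r : ℚ))^2 - 5*((F r : ℚ))^2 = -4 := by
    exact_mod_cast L_sq_odd r hro
  induction n, hn using Nat.le_induction with
  | base =>
      constructor
      · intro h; exact absurd h (by decide)
      · intro _
        rw [show Finset.Icc 1 1 = {1} from rfl, Finset.sum_singleton,
          show 2 * r * 1 = 2 * r from by ring, show r * Nat.succ 0 = r from by omega,
          show r + r = 2 * r from by ring, F_double' r, L_double_odd r hro,
          L_triple_odd r hro]
        ring
  | succ n hn1 ih =>
      have hsum := Finset.sum_Icc_succ_top (show 1 ≤ n + 1 by omega)
        (fun k => F (2 * r * k) ^ 3)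
      have hA := two_F_add (r * n) r
      have hB := two_L_add (r * n) r
      have hA2 := two_F_add (r * n + r) r
      have hB2 := two_L_add (r * n + r) r
      have hF2 : F (2 * r * (n + 1)) = F (r * n + r) * L (r * n + r) := by
        rw [show 2 * r * (n + 1) = 2 * (r * n + r) from by ring]
        exact F_double' _
      have hAq : ((F (r*n+r) : ℚ)) = ((F (r*n) : ℚ) * (L r : ℚ) + (L (r*n) : ℚ) * (F r : ℚ))/2 := by
        rw [eq_div_iff (two_ne_zero)]
        push_cast
        have : ((2 * F (r*n+r) : ℤ) : ℚ) = ((F (r*n) * L r + L (r*n) * F r : ℤ) : ℚ) := by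
          exact_mod_cast congrArg (Int.cast : ℤ → ℚ) hA
        push_cast at this; linarith
      have hBq : ((L (r*n+r) : ℚ)) = ((L (r*n) : ℚ) * (L r : ℚ) + 5 * (F (r*n) : ℚ) * (F r : ℚ))/2 := by
        rw [eq_div_iff (two_ne_zero)]
        have : ((2 * L (r*n+r) : ℤ) : ℚ) = ((L (r*n) * L r + 5 * F (r*n) * F r : ℤ) : ℚ) := by
          exact_mod_cast congrArg (Int.cast : ℤ → ℚ) hB
        push_cast at this; linarith
      have hA2q : ((F (r*n+r+r) : ℚ)) = ((F (r*n+r) : ℚ) * (L r : ℚ) + (L (r*n+r) : ℚ) * (F r : ℚ))/2 := by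
        rw [eq_div_iff (two_ne_zero)]
        have : ((2 * F (r*n+r+r) : ℤ) : ℚ) = ((F (r*n+r) * L r + L (r*n+r) * F r : ℤ) : ℚ) := by
          exact_mod_cast congrArg (Int.cast : ℤ → ℚ) hA2
        push_cast at this; linarith
      have hB2q : ((L (r*n+r+r) : ℚ)) = ((L (r*n+r) : ℚ) * (L r : ℚ) + 5 * (F (r*n+r) : ℚ) * (F r : ℚ))/2 := by
        rw [eq_div_iff (two_ne_zero)]
        have : ((2 * L (r*n+r+r) : ℤ) : ℚ) = ((L (r*n+r) * L r + 5 * F (r*n+r) * F r : ℤ) : ℚ) := by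
          exact_mod_cast congrArg (Int.cast : ℤ → ℚ) hB2
        push_cast at this; linarith
      constructor
      · -- Even (n+1), so n is odd
        intro hev
        have hodd : Odd n := (Nat.not_even_iff_odd).mp (Nat.even_add_one.mp hev)
        have ihh := ih.2 hodd
        have h1 : L (r*n) ^ 2 - 5 * F (r*n) ^ 2 = -4 := by
          have := LF_sq (r * n)
          rw [Odd.neg_one_pow (Odd.mul hro hodd)] at this
          linarith
        have h1q : ((L (r*n) : ℚ))^2 - 5*((F (r*n) : ℚ))^2 = -4 := by exact_mod_cast h1
        have key := keyII (F (r*n) : ℚ) (L (r*n) : ℚ) (F r : ℚ) (L r : ℚ)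
          (F (r*n+r) : ℚ) (L (r*n+r) : ℚ) (F (r*n+r+r) : ℚ) (L (r*n+r+r) : ℚ)
          h1q h2q hAq hBq hA2q hB2q
        rw [show r * (n + 1) = r * n + r from by ring, hsum, mul_add, ihh, hF2,
          L_triple_odd r hro]
        exact_mod_cast key
      · -- Odd (n+1), so n is even
        intro hoddn1
        have hev : Even n := by
          rcases Nat.even_or_odd n with h | h
          · exact h
          · exact absurd (Odd.add_one h) (Nat.not_even_iff_odd.mpr hoddn1)
        have ihh := ih.1 hev
        have h1 : L (r*n) ^ 2 - 5 * F (r*n) ^ 2 = 4 := by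
          have := LF_sq (r * n)
          rw [Even.neg_one_pow (Even.mul_left hev r)] at this
          linarith
        have h1q : ((L (r*n) : ℚ))^2 - 5*((F (r*n) : ℚ))^2 = 4 := by exact_mod_cast h1
        have key := keyI (F (r*n) : ℚ) (L (r*n) : ℚ) (F r : ℚ) (L r : ℚ)
          (F (r*n+r) : ℚ) (L (r*n+r) : ℚ) (F (r*n+r+r) : ℚ) (L (r*n+r+r) : ℚ)
          h1q h2q hAq hBq hA2q hB2q
        rw [show r * (n + 1) = r * n + r from by ring, hsum, mul_add, ihh, hF2,
          L_triple_odd r hro]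
        exact_mod_cast key
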